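/- In a hyperextensive category (countable coproducts are disjoint and universal, and summand subobjects are closed under countable disjoint unions), the union of an ω-chain of summands exists, is again a summand, and is stable under pullbacks. -/

import Mathlib

open CategoryTheory Limits

universe v u

variable {C : Type u} [Category.{v} C]

/-- A morphism is a summand if it is a coproduct injection, i.e. it has a cocomplement
making the pair a binary coproduct. -/
def IsSummand {A X : C} (m : A ⟶ X) : Prop :=
  ∃ (A' : C) (m' : A' ⟶ X), Nonempty (IsColimit (BinaryCofan.mk m m'))

section Aux

/-- `fac` for binary cofans made with `mk`. -/
theorem bfacl {X Y T : C} {f : X ⟶ T} {g : Y ⟶ T} (h : IsColimit (BinaryCofan.mk f g))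
    (s : BinaryCofan X Y) : f ≫ h.desc s = s.inl := h.fac s ⟨WalkingPair.left⟩

theorem bfacr {X Y T : C} {f : X ⟶ T} {g : Y ⟶ T} (h : IsColimit (BinaryCofan.mk f g))
    (s : BinaryCofan X Y) : g ≫ h.desc s = s.inr := h.fac s ⟨WalkingPair.right⟩

theorem bext {X Y T T' : C} {f : X ⟶ T} {g : Y ⟶ T} (h : IsColimit (BinaryCofan.mk f g))
    {u v : T ⟶ T'} (h1 : f ≫ u = f ≫ v) (h2 : g ≫ u = g ≫ v) : u = v :=
  BinaryCofan.IsColimit.hom_ext h h1 h2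

theorem nfac {B : ℕ → C} {T : C} {inj : ∀ i, B i ⟶ T} (h : IsColimit (Cofan.mk T inj))
    {T' : C} (g : ∀ i, B i ⟶ T') (i : ℕ) :
    inj i ≫ h.desc (Cofan.mk T' g) = g i := h.fac _ ⟨i⟩

theorem next' {B : ℕ → C} {T : C} {inj : ∀ i, B i ⟶ T} (h : IsColimit (Cofan.mk T inj))
    {T' : C} {u v : T ⟶ T'} (w : ∀ i, inj i ≫ u = inj i ≫ v) : u = v :=
  h.hom_ext fun ⟨i⟩ => w i

variable [HasPullbacks C] [HasInitial C] [HasBinaryCoproducts C]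
variable [HasColimitsOfShape (Discrete ℕ) C]

/-- Strictness of the initial object, from universality of binary coproducts. -/
theorem aux_strict
    (huniv₂ : ∀ {A B X W : C} (m : A ⟶ X) (n : B ⟶ X) (f : W ⟶ X),
      Nonempty (IsColimit (BinaryCofan.mk m n)) →
      Nonempty (IsColimit (BinaryCofan.mk (pullback.snd m f) (pullback.snd n f))))
    {Z I : C} (hI : IsInitial I) (f : Z ⟶ I) : Nonempty (IsInitial Z) := by
  have h0 : IsColimit (BinaryCofan.mk (𝟙 I) (𝟙 I)) :=
    BinaryCofan.isColimitMk (fun s => hI.to _) (fun s => hI.hom_ext _ _)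
      (fun s => hI.hom_ext _ _) (fun s t _ _ => hI.hom_ext _ _)
  obtain ⟨hc⟩ := huniv₂ (𝟙 I) (𝟙 I) f ⟨h0⟩
  have hs : pullback.lift f (𝟙 Z) (by simp) ≫ pullback.snd (𝟙 I) f = 𝟙 Z :=
    pullback.lift_snd _ _ _
  have key : ∀ {T : C} (g h : Z ⟶ T), g = h := by
    intro T g h
    have h1 := bfacl hc (BinaryCofan.mk (pullback.snd (𝟙 I) f ≫ g) (pullback.snd (𝟙 I) f ≫ h))
    have h2 := bfacr hc (BinaryCofan.mk (pullback.snd (𝟙 I) f ≫ g) (pullback.snd (𝟙 I) f ≫ h))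
    have h3 : pullback.snd (𝟙 I) f ≫ g = pullback.snd (𝟙 I) f ≫ h := h1.symm.trans h2
    calc g = (pullback.lift f (𝟙 Z) (by simp) ≫ pullback.snd (𝟙 I) f) ≫ g := by
            rw [hs, Category.id_comp]
      _ = (pullback.lift f (𝟙 Z) (by simp) ≫ pullback.snd (𝟙 I) f) ≫ h := by
            rw [Category.assoc, Category.assoc, h3]
      _ = h := by rw [hs, Category.id_comp]
  exact ⟨IsInitial.ofUniqueHom (fun T => f ≫ hI.to T) (fun T mm => key _ _)⟩

/-- Binary coproducts are disjoint, from disjointness of countable coproducts. -/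
theorem aux_bdisj
    (hdisj : ∀ (A : ℕ → C) (i j : ℕ), i ≠ j →
      Nonempty (IsInitial (pullback (Sigma.ι A i) (Sigma.ι A j))))
    (huniv₂ : ∀ {A B X W : C} (m : A ⟶ X) (n : B ⟶ X) (f : W ⟶ X),
      Nonempty (IsColimit (BinaryCofan.mk m n)) →
      Nonempty (IsColimit (BinaryCofan.mk (pullback.snd m f) (pullback.snd n f))))
    {A A' X : C} {a : A ⟶ X} {a' : A' ⟶ X}
    (hc : IsColimit (BinaryCofan.mk a a')) : Nonempty (IsInitial (pullback a a')) := by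
  let B : ℕ → C := fun n => match n with
    | 0 => A
    | 1 => A'
    | _ => ⊥_ C
  let b : ∀ n, B n ⟶ X := fun n => match n with
    | 0 => a
    | 1 => a'
    | (n+2) => initial.to X
  have hB2 : ∀ n, IsInitial (B (n + 2)) := fun n => initialIsInitial
  let φ : (∐ B) ⟶ X := Sigma.desc b
  let ψ : X ⟶ ∐ B := hc.desc (BinaryCofan.mk (Sigma.ι B 0) (Sigma.ι B 1))
  have hfl : a ≫ ψ = Sigma.ι B 0 := bfacl hc _
  have hfr : a' ≫ ψ = Sigma.ι B 1 := bfacr hc _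
  have hι0 : Sigma.ι B 0 ≫ φ = a := Sigma.ι_desc _ _
  have hι1 : Sigma.ι B 1 ≫ φ = a' := Sigma.ι_desc _ _
  have hψφ : ψ ≫ φ = 𝟙 X := by
    apply bext hc
    · rw [← Category.assoc, hfl, hι0, Category.comp_id]
    · rw [← Category.assoc, hfr, hι1, Category.comp_id]
  have hφψ : φ ≫ ψ = 𝟙 (∐ B) := by
    apply next' (coproductIsCoproduct B)
    intro n
    match n with
    | 0 => rw [← Category.assoc, hι0, hfl, Category.comp_id]
    | 1 => rw [← Category.assoc, hι1, hfr, Category.comp_id]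
    | (n+2) => exact (hB2 n).hom_ext _ _
  have : IsIso φ := ⟨ψ, hφψ, hψφ⟩
  have hcomm : pullback.fst a a' ≫ Sigma.ι B 0 = pullback.snd a a' ≫ Sigma.ι B 1 := by
    rw [← cancel_mono φ]
    simp only [Category.assoc]
    rw [hι0, hι1, pullback.condition]
  obtain ⟨hin⟩ := hdisj B 0 1 (by omega)
  exact aux_strict huniv₂ hin (pullback.lift _ _ hcomm)

/-- Summands compose. -/
theorem aux_comp {D A X : C} {e : D ⟶ A} {n : A ⟶ X}
    (h1 : IsSummand e) (h2 : IsSummand n) : IsSummand (e ≫ n) := by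
  obtain ⟨P, p, ⟨hA⟩⟩ := h1
  obtain ⟨A', n', ⟨hX⟩⟩ := h2
  refine ⟨P ⨿ A', coprod.desc (p ≫ n) n', ⟨BinaryCofan.isColimitMk
    (fun s => hX.desc (BinaryCofan.mk
      (hA.desc (BinaryCofan.mk s.inl (coprod.inl ≫ s.inr))) (coprod.inr ≫ s.inr)))
    (fun s => ?_) (fun s => ?_) (fun s t ht1 ht2 => ?_)⟩⟩
  · erw [Category.assoc, bfacl hX]
    exact bfacl hA _
  · apply coprod.hom_ext
    · erw [coprod.inl_desc_assoc, Category.assoc, bfacl hX]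
      exact bfacr hA _
    · erw [coprod.inr_desc_assoc]
      exact bfacr hX _
  · apply bext hX
    · erw [bfacl hX]
      erw [BinaryCofan.mk_inl]
      apply bext hA
      · erw [bfacl hA]
        erw [BinaryCofan.mk_inl, ← Category.assoc]
        exact ht1
      · erw [bfacr hA]
        erw [BinaryCofan.mk_inr]
        erw [← ht2, coprod.inl_desc_assoc, Category.assoc]
    · erw [bfacr hX]
      erw [BinaryCofan.mk_inr]
      erw [← ht2, coprod.inr_desc_assoc]
      rfl

end Aux

noncomputable section Constr

variable [HasPullbacks C] [HasInitial C] [HasBinaryCoproducts C]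
variable [HasColimitsOfShape (Discrete ℕ) C]
variable {X : C} {A : ℕ → C} (m : ∀ i, A i ⟶ X) (hm : ∀ i, IsSummand (m i))

/-- Chosen cocomplement object of `m i`. -/
def auxC (i : ℕ) : C := (hm i).choose

/-- Chosen cocomplement morphism of `m i`. -/
def auxC' (i : ℕ) : auxC m hm i ⟶ X := (hm i).choose_spec.choose

theorem auxC'_colim (i : ℕ) : Nonempty (IsColimit (BinaryCofan.mk (m i) (auxC' m hm i))) :=
  (hm i).choose_spec.choose_spec

/-- The "new part" at stage `i`. -/
def auxD : ℕ → C
  | 0 => A 0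
  | (i+1) => pullback (auxC' m hm i) (m (i+1))

/-- Inclusion of the new part into `A i`. -/
def auxE : ∀ i, auxD m hm i ⟶ A i
  | 0 => 𝟙 (A 0)
  | (_+1) => pullback.snd _ _

/-- Inclusion of the new part into `X`. -/
def auxd (i : ℕ) : auxD m hm i ⟶ X := auxE m hm i ≫ m i

theorem auxd_zero : auxd m hm 0 = m 0 := by
  show auxE m hm 0 ≫ m 0 = m 0
  show 𝟙 (A 0) ≫ m 0 = m 0
  rw [Category.id_comp]

theorem auxd_succ (i : ℕ) :
    auxd m hm (i+1) = pullback.fst (auxC' m hm i) (m (i+1)) ≫ auxC' m hm i := by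
  show auxE m hm (i+1) ≫ m (i+1) = _
  show pullback.snd _ _ ≫ m (i+1) = _
  rw [pullback.condition]

variable (huniv₂ : ∀ {A B X W : C} (m : A ⟶ X) (n : B ⟶ X) (f : W ⟶ X),
      Nonempty (IsColimit (BinaryCofan.mk m n)) →
      Nonempty (IsColimit (BinaryCofan.mk (pullback.snd m f) (pullback.snd n f))))

/-- The decomposition `A (i+1) = (A i ×ₓ A (i+1)) + D (i+1)`. -/
def auxSplit (i : ℕ) : IsColimit (BinaryCofan.mk
    (pullback.snd (m i) (m (i+1))) (pullback.snd (auxC' m hm i) (m (i+1)))) :=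
  Classical.choice (huniv₂ (m i) (auxC' m hm i) (m (i+1)) (auxC'_colim m hm i))

/-- The inclusion `A i ⟶ ∐ D`. -/
def auxk : ∀ i, A i ⟶ ∐ (auxD m hm)
  | 0 => Sigma.ι (auxD m hm) 0
  | (i+1) => (auxSplit m hm huniv₂ i).desc
      (BinaryCofan.mk (pullback.fst (m i) (m (i+1)) ≫ auxk i) (Sigma.ι (auxD m hm) (i+1)))

theorem auxk_comp : ∀ i, auxk m hm huniv₂ i ≫ Sigma.desc (auxd m hm) = m i := by
  intro i
  induction i with
  | zero =>
    show Sigma.ι (auxD m hm) 0 ≫ Sigma.desc (auxd m hm) = m 0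
    rw [Sigma.ι_desc, auxd_zero]
  | succ i ih =>
    apply bext (auxSplit m hm huniv₂ i)
    · rw [show auxk m hm huniv₂ (i+1) = (auxSplit m hm huniv₂ i).desc
        (BinaryCofan.mk (pullback.fst (m i) (m (i+1)) ≫ auxk m hm huniv₂ i)
          (Sigma.ι (auxD m hm) (i+1))) from rfl]
      erw [← Category.assoc, bfacl (auxSplit m hm huniv₂ i)]
      erw [BinaryCofan.mk_inl]
      rw [Category.assoc, ih, pullback.condition]
    · rw [show auxk m hm huniv₂ (i+1) = (auxSplit m hm huniv₂ i).desc
        (BinaryCofan.mk (pullback.fst (m i) (m (i+1)) ≫ auxk m hm huniv₂ i)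
          (Sigma.ι (auxD m hm) (i+1))) from rfl]
      erw [← Category.assoc, bfacr (auxSplit m hm huniv₂ i)]
      erw [BinaryCofan.mk_inr]
      erw [Sigma.ι_desc]
      rfl

include huniv₂ in
theorem auxd_summand (i : ℕ) : IsSummand (auxd m hm i) := by
  cases i with
  | zero => rw [auxd_zero]; exact hm 0
  | succ i =>
    have he : IsSummand (auxE m hm (i+1)) :=
      ⟨pullback (m i) (m (i+1)), pullback.snd _ _,
        ⟨BinaryCofan.isColimitFlip (auxSplit m hm huniv₂ i)⟩⟩
    exact aux_comp he (hm (i+1))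

theorem auxfac (ι : ∀ i, A i ⟶ A (i + 1)) (hι : ∀ i, ι i ≫ m (i + 1) = m i) :
    ∀ i j, i ≤ j → ∃ g : A i ⟶ A j, g ≫ m j = m i := by
  intro i j hij
  induction j with
  | zero =>
    obtain rfl : i = 0 := Nat.le_zero.mp hij
    exact ⟨𝟙 _, Category.id_comp _⟩
  | succ j ihj =>
    rcases Nat.eq_or_lt_of_le hij with h | h
    · subst h
      exact ⟨𝟙 _, Category.id_comp _⟩
    · obtain ⟨g, hg⟩ := ihj (Nat.lt_succ_iff.mp h)
      exact ⟨g ≫ ι j, by rw [Category.assoc, hι, hg]⟩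

include huniv₂ in
theorem auxd_disj
    (hdisj : ∀ (A : ℕ → C) (i j : ℕ), i ≠ j →
      Nonempty (IsInitial (pullback (Sigma.ι A i) (Sigma.ι A j))))
    (ι : ∀ i, A i ⟶ A (i + 1)) (hι : ∀ i, ι i ≫ m (i + 1) = m i) :
    ∀ i j, i ≠ j → Nonempty (IsInitial (pullback (auxd m hm i) (auxd m hm j))) := by
  have key : ∀ i j, i < j → Nonempty (IsInitial (pullback (auxd m hm i) (auxd m hm j))) := by
    intro i j hij
    obtain ⟨j, rfl⟩ : ∃ j', j = j' + 1 := ⟨j - 1, by omega⟩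
    obtain ⟨g, hg⟩ := auxfac m ι hι i j (by omega)
    obtain ⟨hbin⟩ := aux_bdisj hdisj huniv₂ (Classical.choice (auxC'_colim m hm j))
    have hcomm : (pullback.fst (auxd m hm i) (auxd m hm (j+1)) ≫ auxE m hm i ≫ g) ≫ m j =
        (pullback.snd (auxd m hm i) (auxd m hm (j+1)) ≫
          pullback.fst (auxC' m hm j) (m (j+1))) ≫ auxC' m hm j := by
      calc (pullback.fst (auxd m hm i) (auxd m hm (j+1)) ≫ auxE m hm i ≫ g) ≫ m j
          = pullback.fst (auxd m hm i) (auxd m hm (j+1)) ≫ auxE m hm i ≫ g ≫ m j := by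
            simp only [Category.assoc]
        _ = pullback.fst (auxd m hm i) (auxd m hm (j+1)) ≫ auxd m hm i := by rw [hg]; rfl
        _ = pullback.snd (auxd m hm i) (auxd m hm (j+1)) ≫ auxd m hm (j+1) :=
            pullback.condition
        _ = pullback.snd (auxd m hm i) (auxd m hm (j+1)) ≫
              pullback.fst (auxC' m hm j) (m (j+1)) ≫ auxC' m hm j :=
            congrArg (fun q => pullback.snd (auxd m hm i) (auxd m hm (j+1)) ≫ q)
              (auxd_succ m hm j)
        _ = (pullback.snd (auxd m hm i) (auxd m hm (j+1)) ≫
              pullback.fst (auxC' m hm j) (m (j+1))) ≫ auxC' m hm j :=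
            (Category.assoc _ _ _).symm
    exact aux_strict huniv₂ hbin (pullback.lift _ _ hcomm)
  intro i j hij
  rcases Nat.lt_or_ge i j with h | h
  · exact key i j h
  · obtain ⟨hin⟩ := key j i (by omega)
    exact ⟨hin.ofIso (pullbackSymmetry _ _)⟩

end Constr

/-- In a hyperextensive category (countable coproducts are disjoint and universal, and
summands are closed under countable disjoint unions), the union of an ω-chain of
summands exists, is again a summand, and is stable under pullbacks. -/
theorem hyperextensive_chain_union
    [HasPullbacks C] [HasInitial C] [HasBinaryCoproducts C]
    [HasColimitsOfShape (Discrete ℕ) C]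
    -- countable coproducts are disjoint
    (hdisj : ∀ (A : ℕ → C) (i j : ℕ), i ≠ j →
      Nonempty (IsInitial (pullback (Sigma.ι A i) (Sigma.ι A j))))
    -- countable coproducts are universal (stable under pullback)
    (hunivℕ : ∀ (A : ℕ → C) {X W : C} (m : ∀ i, A i ⟶ X) (f : W ⟶ X),
      Nonempty (IsColimit (Cofan.mk X m)) →
      Nonempty (IsColimit (Cofan.mk W fun i => pullback.snd (m i) f)))
    -- binary coproducts are universal (stable under pullback)
    (huniv₂ : ∀ {A B X W : C} (m : A ⟶ X) (n : B ⟶ X) (f : W ⟶ X),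
      Nonempty (IsColimit (BinaryCofan.mk m n)) →
      Nonempty (IsColimit (BinaryCofan.mk (pullback.snd m f) (pullback.snd n f))))
    -- summands are closed under countable disjoint unions
    (hsum : ∀ (A : ℕ → C) (X : C) (m : ∀ i, A i ⟶ X),
      (∀ i, IsSummand (m i)) →
      (∀ i j, i ≠ j → Nonempty (IsInitial (pullback (m i) (m j)))) →
      IsSummand (Sigma.desc m : (∐ A) ⟶ X))
    -- an ω-chain of summands of X
    {X : C} (A : ℕ → C) (m : ∀ i, A i ⟶ X) (hm : ∀ i, IsSummand (m i))
    (ι : ∀ i, A i ⟶ A (i + 1)) (hι : ∀ i, ι i ≫ m (i + 1) = m i) :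
    ∃ (U : C) (u : U ⟶ X),
      -- the union is a summand
      IsSummand u ∧
      -- it contains every member of the chain
      (∀ i, ∃ k : A i ⟶ U, k ≫ u = m i) ∧
      -- and is the least subobject doing so
      (∀ (V : C) (v : V ⟶ X), Mono v → (∀ i, ∃ k : A i ⟶ V, k ≫ v = m i) →
        ∃ w : U ⟶ V, w ≫ v = u) ∧
      -- the union is stable under pullbacks:
      (∀ (W : C) (f : W ⟶ X),
        -- its pullback is again a summand,
        IsSummand (pullback.snd u f) ∧
        -- containing the pullbacks of the chain,
        (∀ i, ∃ k : pullback (m i) f ⟶ pullback u f,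
          k ≫ pullback.snd u f = pullback.snd (m i) f) ∧
        -- and least among monos containing them, i.e. it is the union of the pullbacks
        (∀ (V : C) (v : V ⟶ W), Mono v →
          (∀ i, ∃ k : pullback (m i) f ⟶ V, k ≫ v = pullback.snd (m i) f) →
          ∃ w : pullback u f ⟶ V, w ≫ v = pullback.snd u f)) := by
  have husum : IsSummand (Sigma.desc (auxd m hm) : (∐ auxD m hm) ⟶ X) :=
    hsum _ _ _ (auxd_summand m hm huniv₂) (auxd_disj m hm huniv₂ hdisj ι hι)
  refine ⟨∐ auxD m hm, Sigma.desc (auxd m hm), husum,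
    fun i => ⟨auxk m hm huniv₂ i, auxk_comp m hm huniv₂ i⟩, ?_, ?_⟩
  · -- leastness
    intro V v _ hk
    refine ⟨Sigma.desc (fun i => auxE m hm i ≫ (hk i).choose), ?_⟩
    apply Sigma.hom_ext
    intro i
    rw [← Category.assoc, Sigma.ι_desc, Sigma.ι_desc, Category.assoc, (hk i).choose_spec]
    rfl
  · -- pullback stability
    intro W f
    obtain ⟨U', u', hcU⟩ := husum
    refine ⟨⟨pullback u' f, pullback.snd u' f, huniv₂ _ _ f hcU⟩, ?_, ?_⟩
    · -- containment
      intro i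
      refine ⟨pullback.lift (pullback.fst (m i) f ≫ auxk m hm huniv₂ i) (pullback.snd (m i) f)
        ?_, pullback.lift_snd _ _ _⟩
      rw [Category.assoc, auxk_comp m hm huniv₂ i, pullback.condition]
    · -- leastness of the pullback
      intro V v _ hk
      set u : (∐ auxD m hm) ⟶ X := Sigma.desc (auxd m hm) with hu
      have hQ : IsColimit (Cofan.mk (pullback u f)
          (fun i => pullback.snd (Sigma.ι (auxD m hm) i) (pullback.fst u f))) :=
        Classical.choice (hunivℕ (auxD m hm) (Sigma.ι (auxD m hm)) (pullback.fst u f)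
          ⟨coproductIsCoproduct _⟩)
      have hcomm : ∀ i, (pullback.fst (Sigma.ι (auxD m hm) i) (pullback.fst u f) ≫
            auxE m hm i) ≫ m i =
          (pullback.snd (Sigma.ι (auxD m hm) i) (pullback.fst u f) ≫
            pullback.snd u f) ≫ f := by
        intro i
        calc (pullback.fst (Sigma.ι (auxD m hm) i) (pullback.fst u f) ≫ auxE m hm i) ≫ m i
            = pullback.fst (Sigma.ι (auxD m hm) i) (pullback.fst u f) ≫ auxd m hm i := by
              rw [Category.assoc]; rfl
          _ = pullback.fst (Sigma.ι (auxD m hm) i) (pullback.fst u f) ≫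
                Sigma.ι (auxD m hm) i ≫ u := by
              rw [hu, Sigma.ι_desc]
          _ = (pullback.fst (Sigma.ι (auxD m hm) i) (pullback.fst u f) ≫
                Sigma.ι (auxD m hm) i) ≫ u := by rw [Category.assoc]
          _ = (pullback.snd (Sigma.ι (auxD m hm) i) (pullback.fst u f) ≫
                pullback.fst u f) ≫ u := by rw [pullback.condition]
          _ = pullback.snd (Sigma.ι (auxD m hm) i) (pullback.fst u f) ≫
                pullback.fst u f ≫ u := by rw [Category.assoc]
          _ = pullback.snd (Sigma.ι (auxD m hm) i) (pullback.fst u f) ≫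
                pullback.snd u f ≫ f := by rw [pullback.condition]
          _ = (pullback.snd (Sigma.ι (auxD m hm) i) (pullback.fst u f) ≫
                pullback.snd u f) ≫ f := by rw [Category.assoc]
      refine ⟨hQ.desc (Cofan.mk V (fun i =>
        pullback.lift _ _ (hcomm i) ≫ (hk i).choose)), ?_⟩
      apply next' hQ
      intro i
      rw [← Category.assoc, nfac hQ, Category.assoc, (hk i).choose_spec,
        pullback.lift_snd]
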